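/- If s and t are relatively prime positive integers, then Φ_s(x^t) = ∏_{r | t} Φ_{rs}(x), where the product is over all positive divisors r of t and Φ_n denotes the n-th cyclotomic polynomial. -/

import Mathlib

open Polynomial Finset

private lemma prod_divisors_mul_coprime (s t : ℕ) (hst : Nat.Coprime s t)
    (f : ℕ → Polynomial ℤ) :
    ∏ d ∈ (s * t).divisors, f d = ∏ a ∈ s.divisors, ∏ b ∈ t.divisors, f (a * b) := by
  rw [Nat.divisors_mul, Finset.mul_def, Finset.prod_image, Finset.prod_product]
  rintro ⟨a, b⟩ hab ⟨c, d⟩ hcd h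
  simp only [Finset.mem_coe, Finset.mem_product, Nat.mem_divisors] at hab hcd
  simp only at h
  have hb : Nat.Coprime b s := Nat.Coprime.coprime_dvd_left hab.2.1 hst.symm
  have hd : Nat.Coprime d s := Nat.Coprime.coprime_dvd_left hcd.2.1 hst.symm
  have hac : a = c := by
    have h1 : Nat.gcd (a * b) s = a := by
      rw [Nat.Coprime.gcd_mul_right_cancel a hb, Nat.gcd_eq_left hab.1.1]
    have h2 : Nat.gcd (c * d) s = c := by
      rw [Nat.Coprime.gcd_mul_right_cancel c hd, Nat.gcd_eq_left hcd.1.1]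
    rw [← h1, ← h2, h]
  have ha0 : a ≠ 0 := by
    rintro rfl
    exact hab.1.2 (zero_dvd_iff.mp hab.1.1)
  subst hac
  have : b = d := Nat.eq_of_mul_eq_mul_left (Nat.pos_of_ne_zero ha0) h
  simp [this]

private lemma cyclotomic_comp_X_pow_aux (t : ℕ) (ht : 0 < t) :
    ∀ s, 0 < s → Nat.Coprime s t →
      (cyclotomic s ℤ).comp (X ^ t) = ∏ r ∈ t.divisors, cyclotomic (r * s) ℤ := by
  intro s
  induction s using Nat.strong_induction_on with
  | _ s ih =>
  intro hs hst
  set P : Polynomial ℤ := ∏ a ∈ s.properDivisors, (cyclotomic a ℤ).comp (X ^ t) with hP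
  have hdiv : ∏ a ∈ s.divisors, (cyclotomic a ℤ).comp (X ^ t)
      = (cyclotomic s ℤ).comp (X ^ t) * P := by
    rw [← Nat.insert_self_properDivisors hs.ne', Finset.prod_insert
      Nat.self_notMem_properDivisors]
  have hX : ∏ a ∈ s.divisors, (cyclotomic a ℤ).comp (X ^ t) = X ^ (s * t) - 1 := by
    rw [← Polynomial.prod_comp, prod_cyclotomic_eq_X_pow_sub_one hs ℤ]
    simp [sub_comp, pow_comp, ← pow_mul, mul_comm]
  have hXne : (X ^ (s * t) - 1 : Polynomial ℤ) ≠ 0 := by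
    have : (X ^ (s * t) - C 1 : Polynomial ℤ) ≠ 0 :=
      (monic_X_pow_sub_C 1 (by positivity)).ne_zero
    simpa using this
  have hPne : P ≠ 0 := by
    intro h
    apply hXne
    rw [← hX, hdiv, h, mul_zero]
  have hIH : P = ∏ a ∈ s.properDivisors, ∏ b ∈ t.divisors, cyclotomic (b * a) ℤ := by
    refine Finset.prod_congr rfl fun a haa => ?_
    obtain ⟨hadvd, halt⟩ := Nat.mem_properDivisors.mp haa
    have ha0 : 0 < a := Nat.pos_of_mem_divisors (Nat.mem_divisors.mpr ⟨hadvd, hs.ne'⟩)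
    exact ih a halt ha0 (Nat.Coprime.coprime_dvd_left hadvd hst)
  have key : (cyclotomic s ℤ).comp (X ^ t) * P
      = (∏ r ∈ t.divisors, cyclotomic (r * s) ℤ) * P := by
    calc (cyclotomic s ℤ).comp (X ^ t) * P
        = X ^ (s * t) - 1 := by rw [← hdiv, hX]
      _ = ∏ d ∈ (s * t).divisors, cyclotomic d ℤ :=
          (prod_cyclotomic_eq_X_pow_sub_one (by positivity) ℤ).symm
      _ = ∏ a ∈ s.divisors, ∏ b ∈ t.divisors, cyclotomic (a * b) ℤ :=
          prod_divisors_mul_coprime s t hst _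
      _ = ∏ a ∈ s.divisors, ∏ b ∈ t.divisors, cyclotomic (b * a) ℤ :=
          Finset.prod_congr rfl fun a _ => Finset.prod_congr rfl fun b _ => by rw [mul_comm]
      _ = (∏ b ∈ t.divisors, cyclotomic (b * s) ℤ) *
            ∏ a ∈ s.properDivisors, ∏ b ∈ t.divisors, cyclotomic (b * a) ℤ := by
          rw [← Nat.insert_self_properDivisors hs.ne', Finset.prod_insert
            Nat.self_notMem_properDivisors]
      _ = (∏ r ∈ t.divisors, cyclotomic (r * s) ℤ) * P := by rw [hIH]
  exact mul_right_cancel₀ hPne key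

theorem cyclotomic_comp_X_pow (s t : ℕ) (hs : 0 < s) (ht : 0 < t)
    (hst : Nat.Coprime s t) :
    (cyclotomic s ℤ).comp (X ^ t) = ∏ r ∈ t.divisors, cyclotomic (r * s) ℤ :=
  cyclotomic_comp_X_pow_aux t ht s hs hst
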